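/- Let W and A1, …, An, B1, …, Bn be finitely-valued random variables such that, for each 1 ≤ i ≤ n, A_i is conditionally independent of B_{i+1}^n given (W, A_{i+1}^n). Then ∑_{i=1}^{n} [ I(A_{i+1}^n; A_i | W, B_{i+1}^n) − I(A^{i−1}; A_i | W, B_{i+1}^n) ] = − ∑_{i=1}^{n} I(B_{i+1}^n; A_i | W, A^{i−1}). -/
import Mathlib


open scoped BigOperators Classical

noncomputable section

namespace BRSec

variable {Ω : Type*} [Fintype Ω]

/-- Probability that the random variable `X` takes the value `a`, under the weight `p`. -/
def prb (p : Ω → ℝ) {α : Type*} (X : Ω → α) (a : α) : ℝ :=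
  ∑ ω, if X ω = a then p ω else 0

/-- `p` is a probability mass function on the finite sample space `Ω`. -/
def IsPMF (p : Ω → ℝ) : Prop :=
  (∀ ω, 0 ≤ p ω) ∧ ∑ ω, p ω = 1

/-- Shannon entropy of the finitely-valued random variable `X`. -/
def H (p : Ω → ℝ) {α : Type*} [Fintype α] (X : Ω → α) : ℝ :=
  ∑ a, Real.negMulLog (prb p X a)

/-- Mutual information `I(X;Y)`. -/
def MI (p : Ω → ℝ) {α β : Type*} [Fintype α] [Fintype β] (X : Ω → α) (Y : Ω → β) : ℝ :=
  H p X + H p Y - H p fun ω => (X ω, Y ω)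

/-- Conditional mutual information `I(X;Y|Z)`. -/
def CMI (p : Ω → ℝ) {α β γ : Type*} [Fintype α] [Fintype β] [Fintype γ]
    (X : Ω → α) (Y : Ω → β) (Z : Ω → γ) : ℝ :=
  (H p fun ω => (X ω, Z ω)) + (H p fun ω => (Y ω, Z ω))
    - (H p fun ω => (X ω, Y ω, Z ω)) - H p Z

/-- `X → Y → Z` is a Markov chain: `X` and `Z` are conditionally independent given `Y`. -/
def MarkovTriple (p : Ω → ℝ) {α β γ : Type*} (X : Ω → α) (Y : Ω → β) (Z : Ω → γ) : Prop :=
  ∀ a b c,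
    prb p (fun ω => (X ω, Y ω, Z ω)) (a, b, c) * prb p Y b
      = prb p (fun ω => (X ω, Y ω)) (a, b) * prb p (fun ω => (Y ω, Z ω)) (b, c)


section Aux

variable {α' β' γ' δ' : Type*}

lemma prb_nonneg (p : Ω → ℝ) (hp : IsPMF p) (X : Ω → α') (a : α') : 0 ≤ prb p X a := by
  unfold prb
  refine Finset.sum_nonneg fun ω _ => ?_
  split <;> simp [hp.1 ω]

lemma sum_prb_fst [Fintype β'] (p : Ω → ℝ) (X : Ω → α') (Y : Ω → β') (a : α') :
    ∑ b, prb p (fun ω => (X ω, Y ω)) (a, b) = prb p X a := by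
  unfold prb
  rw [Finset.sum_comm]
  refine Finset.sum_congr rfl fun ω _ => ?_
  simp only [Prod.mk.injEq, ite_and]
  by_cases h : X ω = a
  · simp [h]
  · simp [h]

lemma sum_prb_snd [Fintype α'] (p : Ω → ℝ) (X : Ω → α') (Y : Ω → β') (b : β') :
    ∑ a, prb p (fun ω => (X ω, Y ω)) (a, b) = prb p Y b := by
  unfold prb
  rw [Finset.sum_comm]
  refine Finset.sum_congr rfl fun ω _ => ?_
  simp only [Prod.mk.injEq]
  by_cases h : Y ω = b
  · simp [h]
  · simp [h]

lemma prb_le_of_marg_fst [Fintype β'] (p : Ω → ℝ) (hp : IsPMF p) (X : Ω → α') (Y : Ω → β')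
    (a : α') (b : β') : prb p (fun ω => (X ω, Y ω)) (a, b) ≤ prb p X a := by
  rw [← sum_prb_fst p X Y a]
  exact Finset.single_le_sum (f := fun b => prb p (fun ω => (X ω, Y ω)) (a, b)) (fun c _ => prb_nonneg p hp _ _) (Finset.mem_univ b)

lemma prb_le_of_marg_snd [Fintype α'] (p : Ω → ℝ) (hp : IsPMF p) (X : Ω → α') (Y : Ω → β')
    (a : α') (b : β') : prb p (fun ω => (X ω, Y ω)) (a, b) ≤ prb p Y b := by
  rw [← sum_prb_snd p X Y b]
  exact Finset.single_le_sum (f := fun a => prb p (fun ω => (X ω, Y ω)) (a, b)) (fun c _ => prb_nonneg p hp _ _) (Finset.mem_univ a)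

lemma prb_assoc (p : Ω → ℝ) (X : Ω → α') (Y : Ω → β') (Z : Ω → γ') (a : α') (b : β') (c : γ') :
    prb p (fun ω => (X ω, Y ω, Z ω)) (a, b, c)
      = prb p (fun ω => ((X ω, Y ω), Z ω)) ((a, b), c) := by
  unfold prb
  refine Finset.sum_congr rfl fun ω _ => ?_
  simp [Prod.ext_iff, and_assoc]

end Aux
section Aux2

variable {γ' δ' : Type*}

lemma prb_eq_zero_of_notMem_image [Fintype γ'] (p : Ω → ℝ) (X : Ω → γ') (b : γ')
    (hb : b ∉ Finset.image X Finset.univ) : prb p X b = 0 := by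
  unfold prb
  refine Finset.sum_eq_zero fun ω _ => ?_
  rw [if_neg]
  exact fun hc => hb (Finset.mem_image.mpr ⟨ω, Finset.mem_univ _, hc⟩)

lemma H_comp_injOn [Fintype γ'] [Fintype δ'] (p : Ω → ℝ) (X : Ω → γ') (f : γ' → δ')
    (hf : Set.InjOn f (Set.range X)) : H p (fun ω => f (X ω)) = H p X := by
  unfold H
  rw [← Finset.sum_subset (Finset.subset_univ (Finset.image (fun ω => f (X ω)) Finset.univ))
    (fun b _ hb => by rw [prb_eq_zero_of_notMem_image p _ b hb, Real.negMulLog_zero])]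
  rw [← Finset.sum_subset (Finset.subset_univ (Finset.image X Finset.univ))
    (fun a _ ha => by rw [prb_eq_zero_of_notMem_image p _ a ha, Real.negMulLog_zero])]
  have himg : Finset.image (fun ω => f (X ω)) Finset.univ
      = Finset.image f (Finset.image X Finset.univ) := by
    rw [Finset.image_image]; rfl
  rw [himg, Finset.sum_image (fun a ha a' ha' hfa => by
    refine hf ?_ ?_ hfa
    · obtain ⟨ω, _, rfl⟩ := Finset.mem_image.mp ha; exact ⟨ω, rfl⟩
    · obtain ⟨ω, _, rfl⟩ := Finset.mem_image.mp ha'; exact ⟨ω, rfl⟩)]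
  refine Finset.sum_congr rfl fun a ha => ?_
  congr 1
  unfold prb
  refine Finset.sum_congr rfl fun ω _ => ?_
  by_cases hx : X ω = a
  · rw [if_pos hx, if_pos (show f (X ω) = f a by rw [hx])]
  · rw [if_neg hx, if_neg (fun hc => hx ?_)]
    obtain ⟨ω', _, rfl⟩ := Finset.mem_image.mp ha
    exact hf ⟨ω, rfl⟩ ⟨ω', rfl⟩ hc

lemma H_ext [Fintype γ'] [Fintype δ'] (p : Ω → ℝ) (X : Ω → γ') (Y : Ω → δ')
    (h : ∀ ω ω', X ω = X ω' ↔ Y ω = Y ω') : H p X = H p Y := by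
  rcases isEmpty_or_nonempty Ω with hΩ | hΩ
  · unfold H prb; simp
  · classical
    obtain ⟨f, hf, hfe⟩ : ∃ f : γ' → δ', Set.InjOn f (Set.range X) ∧ ∀ ω, f (X ω) = Y ω := by
      refine ⟨fun a => if h' : ∃ ω, X ω = a then Y h'.choose else Y (Classical.arbitrary Ω),
        ?_, ?_⟩
      · rintro _ ⟨ω1, rfl⟩ _ ⟨ω2, rfl⟩ heq
        have e1 : ∃ ω, X ω = X ω1 := ⟨ω1, rfl⟩
        have e2 : ∃ ω, X ω = X ω2 := ⟨ω2, rfl⟩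
        beta_reduce at heq
        rw [dif_pos e1, dif_pos e2] at heq
        have h1 : Y e1.choose = Y ω1 := (h _ _).mp e1.choose_spec
        have h2 : Y e2.choose = Y ω2 := (h _ _).mp e2.choose_spec
        rw [h1, h2] at heq
        exact (h _ _).mpr heq
      · intro ω
        have e1 : ∃ ω', X ω' = X ω := ⟨ω, rfl⟩
        beta_reduce
        rw [dif_pos e1]
        exact (h _ _).mp e1.choose_spec
    calc H p X = H p (fun ω => f (X ω)) := (H_comp_injOn p X f hf).symm
    _ = H p Y := by congr 1; funext ω; exact hfe ω

end Aux2
section Aux3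

variable {α' β' γ' : Type*} [Fintype α'] [Fintype β'] [Fintype γ']

lemma H_markov (p : Ω → ℝ) (hp : IsPMF p) (X : Ω → α') (Y : Ω → β') (Z : Ω → γ')
    (h : MarkovTriple p X Y Z) :
    H p (fun ω => (X ω, Y ω, Z ω)) + H p Y
      = H p (fun ω => (X ω, Y ω)) + H p (fun ω => (Y ω, Z ω)) := by
  set q3 : α' → β' → γ' → ℝ := fun a b c => prb p (fun ω => (X ω, Y ω, Z ω)) (a, b, c) with hq3
  set qxy : α' → β' → ℝ := fun a b => prb p (fun ω => (X ω, Y ω)) (a, b) with hqxy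
  set qyz : β' → γ' → ℝ := fun b c => prb p (fun ω => (Y ω, Z ω)) (b, c) with hqyz
  set qy : β' → ℝ := fun b => prb p Y b with hqy
  have f1 : ∀ a b, ∑ c, q3 a b c = qxy a b := by
    intro a b
    have : ∀ c, q3 a b c = prb p (fun ω => ((X ω, Y ω), Z ω)) ((a, b), c) :=
      fun c => prb_assoc p X Y Z a b c
    simp only [this]
    exact sum_prb_fst p (fun ω => (X ω, Y ω)) Z (a, b)
  have f2 : ∀ b c, ∑ a, q3 a b c = qyz b c := by
    intro b c
    exact sum_prb_snd p X (fun ω => (Y ω, Z ω)) (b, c)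
  have f3 : ∀ b, ∑ c, qyz b c = qy b := by
    intro b
    exact sum_prb_fst p Y Z b
  -- pointwise identity
  have key : ∀ a b c, Real.negMulLog (q3 a b c)
      = q3 a b c * Real.log (qy b) - q3 a b c * Real.log (qxy a b)
        - q3 a b c * Real.log (qyz b c) := by
    intro a b c
    by_cases hz : q3 a b c = 0
    · simp [hz]
    · have h3 : 0 < q3 a b c := lt_of_le_of_ne (prb_nonneg p hp _ _) (Ne.symm hz)
      have hxy : 0 < qxy a b := lt_of_lt_of_le h3 (by
        rw [← f1 a b]
        exact Finset.single_le_sum (f := fun c => q3 a b c)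
          (fun c _ => prb_nonneg p hp _ _) (Finset.mem_univ c))
      have hyz : 0 < qyz b c := lt_of_lt_of_le h3 (by
        rw [← f2 b c]
        exact Finset.single_le_sum (f := fun a => q3 a b c)
          (fun a _ => prb_nonneg p hp _ _) (Finset.mem_univ a))
      have hy : 0 < qy b := lt_of_lt_of_le hyz (by
        rw [← f3 b]
        exact Finset.single_le_sum (f := fun c => qyz b c)
          (fun c _ => prb_nonneg p hp _ _) (Finset.mem_univ c))
      have hm := h a b c
      have hlog : Real.log (q3 a b c) + Real.log (qy b)
          = Real.log (qxy a b) + Real.log (qyz b c) := by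
        rw [← Real.log_mul (ne_of_gt h3) (ne_of_gt hy),
          ← Real.log_mul (ne_of_gt hxy) (ne_of_gt hyz)]
        exact congrArg Real.log hm
      have : Real.log (q3 a b c)
          = Real.log (qxy a b) + Real.log (qyz b c) - Real.log (qy b) := by linarith
      rw [Real.negMulLog, this]; ring
  -- expand entropies
  have hH3 : H p (fun ω => (X ω, Y ω, Z ω))
      = ∑ a, ∑ b, ∑ c, Real.negMulLog (q3 a b c) := by
    rw [H, Fintype.sum_prod_type]
    refine Finset.sum_congr rfl fun a _ => ?_
    rw [Fintype.sum_prod_type]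
  have hHxy : H p (fun ω => (X ω, Y ω)) = ∑ a, ∑ b, Real.negMulLog (qxy a b) := by
    rw [H, Fintype.sum_prod_type]
  have hHyz : H p (fun ω => (Y ω, Z ω)) = ∑ b, ∑ c, Real.negMulLog (qyz b c) := by
    rw [H, Fintype.sum_prod_type]
  have hHy : H p Y = ∑ b, Real.negMulLog (qy b) := rfl
  have S1 : ∑ a, ∑ b, ∑ c, q3 a b c * Real.log (qxy a b)
      = ∑ a, ∑ b, qxy a b * Real.log (qxy a b) := by
    refine Finset.sum_congr rfl fun a _ => Finset.sum_congr rfl fun b _ => ?_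
    rw [← Finset.sum_mul, f1]
  have S2 : ∑ a, ∑ b, ∑ c, q3 a b c * Real.log (qyz b c)
      = ∑ b, ∑ c, qyz b c * Real.log (qyz b c) := by
    rw [Finset.sum_comm]
    refine Finset.sum_congr rfl fun b _ => ?_
    rw [Finset.sum_comm]
    refine Finset.sum_congr rfl fun c _ => ?_
    rw [← Finset.sum_mul, f2]
  have S3 : ∑ a, ∑ b, ∑ c, q3 a b c * Real.log (qy b) = ∑ b, qy b * Real.log (qy b) := by
    rw [Finset.sum_comm]
    refine Finset.sum_congr rfl fun b _ => ?_
    have : ∀ a : α', ∑ c, q3 a b c * Real.log (qy b) = (∑ c, q3 a b c) * Real.log (qy b) :=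
      fun a => (Finset.sum_mul ..).symm
    simp only [this]
    rw [← Finset.sum_mul]
    congr 1
    rw [Finset.sum_comm]
    simp only [f2]
    exact f3 b
  have split : ∑ a, ∑ b, ∑ c, Real.negMulLog (q3 a b c)
      = (∑ a, ∑ b, ∑ c, q3 a b c * Real.log (qy b))
        - (∑ a, ∑ b, ∑ c, q3 a b c * Real.log (qxy a b))
        - (∑ a, ∑ b, ∑ c, q3 a b c * Real.log (qyz b c)) := by
    simp only [key, Finset.sum_sub_distrib]
  have negxy : ∑ a, ∑ b, Real.negMulLog (qxy a b)
      = - ∑ a, ∑ b, qxy a b * Real.log (qxy a b) := by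
    simp [Real.negMulLog, Finset.sum_neg_distrib]
  have negyz : ∑ b, ∑ c, Real.negMulLog (qyz b c)
      = - ∑ b, ∑ c, qyz b c * Real.log (qyz b c) := by
    simp [Real.negMulLog, Finset.sum_neg_distrib]
  have negy : ∑ b, Real.negMulLog (qy b) = - ∑ b, qy b * Real.log (qy b) := by
    simp [Real.negMulLog, Finset.sum_neg_distrib]
  rw [hH3, hHxy, hHyz, hHy, split, S1, S2, S3, negxy, negyz, negy]
  ring

end Aux3
section Conv

variable {n : ℕ} {𝒲 : Type*} [Fintype 𝒲]
  {α β : Fin n → Type*} [∀ i, Fintype (α i)] [∀ i, Fintype (β i)]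

/-- indices ≥ k -/
def Sge (n k : ℕ) : Finset (Fin n) := Finset.univ.filter (fun j => k ≤ j.val)
/-- indices < k -/
def Plt (n k : ℕ) : Finset (Fin n) := Finset.univ.filter (fun j => j.val < k)

lemma mem_Sge_succ {i j : Fin n} : j ∈ Sge n (i.val + 1) ↔ i < j := by
  rw [Sge, Finset.mem_filter, Fin.lt_def]
  exact ⟨fun h => by omega, fun h => ⟨Finset.mem_univ _, by omega⟩⟩
lemma mem_Sge_self {i j : Fin n} : j ∈ Sge n i.val ↔ i < j ∨ j = i := by
  rw [Sge, Finset.mem_filter, Fin.lt_def, Fin.ext_iff]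
  exact ⟨fun h => by omega, fun h => ⟨Finset.mem_univ _, by omega⟩⟩
lemma mem_Plt_self {i j : Fin n} : j ∈ Plt n i.val ↔ j < i := by
  rw [Plt, Finset.mem_filter, Fin.lt_def]
  exact ⟨fun h => by omega, fun h => ⟨Finset.mem_univ _, by omega⟩⟩
lemma mem_Plt_succ {i j : Fin n} : j ∈ Plt n (i.val + 1) ↔ j < i ∨ j = i := by
  rw [Plt, Finset.mem_filter, Fin.lt_def, Fin.ext_iff]
  exact ⟨fun h => by omega, fun h => ⟨Finset.mem_univ _, by omega⟩⟩

/-- canonical joint variable recording `W`, `A` on `s`, `B` on `t` -/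
def EE (p : Ω → ℝ) (W : Ω → 𝒲) (A : (i : Fin n) → Ω → α i) (B : (i : Fin n) → Ω → β i)
    (s t : Finset (Fin n)) : ℝ :=
  H p (fun ω => (W ω, fun j : Fin n => if j ∈ s then some (A j ω) else none,
    fun j : Fin n => if j ∈ t then some (B j ω) else none))

lemma optfun_eq_iff {κ : Fin n → Type*} (s : Finset (Fin n)) (f g : (j : Fin n) → κ j) :
    ((fun j : Fin n => if j ∈ s then some (f j) else none)
        = (fun j : Fin n => if j ∈ s then some (g j) else none))
      ↔ ∀ j ∈ s, f j = g j := by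
  rw [funext_iff]
  constructor
  · intro h j hj
    have := h j
    rw [if_pos hj, if_pos hj] at this
    exact Option.some.inj this
  · intro h j
    by_cases hj : j ∈ s
    · rw [if_pos hj, if_pos hj, h j hj]
    · rw [if_neg hj, if_neg hj]

end Conv
section Conv2

variable {n : ℕ} {𝒲 : Type*} [Fintype 𝒲]
  {α β : Fin n → Type*} [∀ i, Fintype (α i)] [∀ i, Fintype (β i)]

lemma ite_some_eq_iff {κ : Fin n → Type*} (P : Fin n → Prop) [DecidablePred P]
    (f g : (j : Fin n) → κ j) :
    (∀ j : Fin n, (if P j then some (f j) else none) = (if P j then some (g j) else none))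
      ↔ ∀ j, P j → f j = g j := by
  constructor
  · intro h j hj
    have := h j
    rw [if_pos hj, if_pos hj] at this
    exact Option.some.inj this
  · intro h j
    by_cases hj : P j
    · rw [if_pos hj, if_pos hj, h j hj]
    · rw [if_neg hj, if_neg hj]

lemma conv1 (p : Ω → ℝ) (W : Ω → 𝒲) (A : (i : Fin n) → Ω → α i) (B : (i : Fin n) → Ω → β i)
    (i : Fin n) :
    H p (fun ω => ((fun j : {j : Fin n // i < j} => A j.1 ω),
        (W ω, fun j : {j : Fin n // i < j} => B j.1 ω)))
      = EE p W A B (Sge n (i.val + 1)) (Sge n (i.val + 1)) := by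
  rw [EE]
  refine H_ext p _ _ fun ω ω' => ?_
  simp only [Prod.mk.injEq, funext_iff, Subtype.forall, mem_Sge_succ, ite_some_eq_iff]
  tauto

end Conv2
section Conv2b
variable {n : ℕ} {𝒲 : Type*} [Fintype 𝒲]
  {α β : Fin n → Type*} [∀ i, Fintype (α i)] [∀ i, Fintype (β i)]

lemma conv2 (p : Ω → ℝ) (W : Ω → 𝒲) (A : (i : Fin n) → Ω → α i) (B : (i : Fin n) → Ω → β i)
    (i : Fin n) :
    H p (fun ω => ((fun j : {j : Fin n // i < j} => A j.1 ω), A i ω,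
        (W ω, fun j : {j : Fin n // i < j} => B j.1 ω)))
      = EE p W A B (Sge n i.val) (Sge n (i.val + 1)) := by
  rw [EE]
  refine H_ext p _ _ fun ω ω' => ?_
  simp only [Prod.mk.injEq, funext_iff, Subtype.forall, mem_Sge_succ, mem_Sge_self,
    ite_some_eq_iff]
  constructor
  · rintro ⟨hA, hAi, hW, hB⟩
    refine ⟨hW, fun j hj => ?_, hB⟩
    rcases hj with hj | rfl
    · exact hA j hj
    · exact hAi
  · rintro ⟨hW, hA, hB⟩
    exact ⟨fun j hj => hA j (Or.inl hj), hA i (Or.inr rfl), hW, hB⟩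
end Conv2b
section Conv3b
variable {n : ℕ} {𝒲 : Type*} [Fintype 𝒲]
  {α β : Fin n → Type*} [∀ i, Fintype (α i)] [∀ i, Fintype (β i)]
variable (p : Ω → ℝ) (W : Ω → 𝒲) (A : (i : Fin n) → Ω → α i) (B : (i : Fin n) → Ω → β i)

lemma conv3 (i : Fin n) :
    H p (fun ω => ((fun j : {j : Fin n // j < i} => A j.1 ω),
        (W ω, fun j : {j : Fin n // i < j} => B j.1 ω)))
      = EE p W A B (Plt n i.val) (Sge n (i.val + 1)) := by
  rw [EE]
  refine H_ext p _ _ fun ω ω' => ?_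
  simp only [Prod.mk.injEq, funext_iff, Subtype.forall, mem_Sge_succ, mem_Plt_self,
    ite_some_eq_iff]
  tauto

lemma conv4 (i : Fin n) :
    H p (fun ω => ((fun j : {j : Fin n // j < i} => A j.1 ω), A i ω,
        (W ω, fun j : {j : Fin n // i < j} => B j.1 ω)))
      = EE p W A B (Plt n (i.val + 1)) (Sge n (i.val + 1)) := by
  rw [EE]
  refine H_ext p _ _ fun ω ω' => ?_
  simp only [Prod.mk.injEq, funext_iff, Subtype.forall, mem_Sge_succ, mem_Plt_succ,
    ite_some_eq_iff]
  constructor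
  · rintro ⟨hA, hAi, hW, hB⟩
    refine ⟨hW, fun j hj => ?_, hB⟩
    rcases hj with hj | rfl
    · exact hA j hj
    · exact hAi
  · rintro ⟨hW, hA, hB⟩
    exact ⟨fun j hj => hA j (Or.inl hj), hA i (Or.inr rfl), hW, hB⟩

lemma conv5 (i : Fin n) :
    H p (fun ω => ((fun j : {j : Fin n // i < j} => B j.1 ω),
        (W ω, fun j : {j : Fin n // j < i} => A j.1 ω)))
      = EE p W A B (Plt n i.val) (Sge n (i.val + 1)) := by
  rw [EE]
  refine H_ext p _ _ fun ω ω' => ?_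
  simp only [Prod.mk.injEq, funext_iff, Subtype.forall, mem_Sge_succ, mem_Plt_self,
    ite_some_eq_iff]
  tauto

lemma conv6 (i : Fin n) :
    H p (fun ω => (A i ω, (W ω, fun j : {j : Fin n // j < i} => A j.1 ω)))
      = EE p W A B (Plt n (i.val + 1)) (∅ : Finset (Fin n)) := by
  rw [EE]
  refine H_ext p _ _ fun ω ω' => ?_
  simp only [Prod.mk.injEq, funext_iff, Subtype.forall, mem_Plt_succ, Finset.notMem_empty,
    ite_some_eq_iff]
  constructor
  · rintro ⟨hAi, hW, hA⟩
    refine ⟨hW, fun j hj => ?_, fun j hj => hj.elim⟩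
    rcases hj with hj | rfl
    · exact hA j hj
    · exact hAi
  · rintro ⟨hW, hA, -⟩
    exact ⟨hA i (Or.inr rfl), hW, fun j hj => hA j (Or.inl hj)⟩

lemma conv7 (i : Fin n) :
    H p (fun ω => ((fun j : {j : Fin n // i < j} => B j.1 ω), A i ω,
        (W ω, fun j : {j : Fin n // j < i} => A j.1 ω)))
      = EE p W A B (Plt n (i.val + 1)) (Sge n (i.val + 1)) := by
  rw [EE]
  refine H_ext p _ _ fun ω ω' => ?_
  simp only [Prod.mk.injEq, funext_iff, Subtype.forall, mem_Sge_succ, mem_Plt_succ,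
    ite_some_eq_iff]
  constructor
  · rintro ⟨hB, hAi, hW, hA⟩
    refine ⟨hW, fun j hj => ?_, hB⟩
    rcases hj with hj | rfl
    · exact hA j hj
    · exact hAi
  · rintro ⟨hW, hA, hB⟩
    exact ⟨hB, hA i (Or.inr rfl), hW, fun j hj => hA j (Or.inl hj)⟩

lemma conv8 (i : Fin n) :
    H p (fun ω => (W ω, fun j : {j : Fin n // j < i} => A j.1 ω))
      = EE p W A B (Plt n i.val) (∅ : Finset (Fin n)) := by
  rw [EE]
  refine H_ext p _ _ fun ω ω' => ?_
  simp only [Prod.mk.injEq, funext_iff, Subtype.forall, mem_Plt_self, Finset.notMem_empty,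
    ite_some_eq_iff]
  tauto

lemma conv9 (i : Fin n) :
    H p (fun ω => (A i ω, (W ω, fun j : {j : Fin n // i < j} => A j.1 ω),
        (fun j : {j : Fin n // i < j} => B j.1 ω)))
      = EE p W A B (Sge n i.val) (Sge n (i.val + 1)) := by
  rw [EE]
  refine H_ext p _ _ fun ω ω' => ?_
  simp only [Prod.mk.injEq, funext_iff, Subtype.forall, mem_Sge_succ, mem_Sge_self,
    ite_some_eq_iff]
  constructor
  · rintro ⟨hAi, ⟨hW, hA⟩, hB⟩
    refine ⟨hW, fun j hj => ?_, hB⟩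
    rcases hj with hj | rfl
    · exact hA j hj
    · exact hAi
  · rintro ⟨hW, hA, hB⟩
    exact ⟨hA i (Or.inr rfl), ⟨hW, fun j hj => hA j (Or.inl hj)⟩, hB⟩

lemma conv10 (i : Fin n) :
    H p (fun ω => (W ω, fun j : {j : Fin n // i < j} => A j.1 ω))
      = EE p W A B (Sge n (i.val + 1)) (∅ : Finset (Fin n)) := by
  rw [EE]
  refine H_ext p _ _ fun ω ω' => ?_
  simp only [Prod.mk.injEq, funext_iff, Subtype.forall, mem_Sge_succ, Finset.notMem_empty,
    ite_some_eq_iff]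
  tauto

lemma conv11 (i : Fin n) :
    H p (fun ω => (A i ω, (W ω, fun j : {j : Fin n // i < j} => A j.1 ω)))
      = EE p W A B (Sge n i.val) (∅ : Finset (Fin n)) := by
  rw [EE]
  refine H_ext p _ _ fun ω ω' => ?_
  simp only [Prod.mk.injEq, funext_iff, Subtype.forall, mem_Sge_self, Finset.notMem_empty,
    ite_some_eq_iff]
  constructor
  · rintro ⟨hAi, hW, hA⟩
    refine ⟨hW, fun j hj => ?_, fun j hj => hj.elim⟩
    rcases hj with hj | rfl
    · exact hA j hj
    · exact hAi
  · rintro ⟨hW, hA, -⟩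
    exact ⟨hA i (Or.inr rfl), hW, fun j hj => hA j (Or.inl hj)⟩

lemma conv12 (i : Fin n) :
    H p (fun ω => ((W ω, fun j : {j : Fin n // i < j} => A j.1 ω),
        (fun j : {j : Fin n // i < j} => B j.1 ω)))
      = EE p W A B (Sge n (i.val + 1)) (Sge n (i.val + 1)) := by
  rw [EE]
  refine H_ext p _ _ fun ω ω' => ?_
  simp only [Prod.mk.injEq, funext_iff, Subtype.forall, mem_Sge_succ, ite_some_eq_iff]
  tauto

end Conv3b


lemma Sge_zero (n : ℕ) : Sge n 0 = (Finset.univ : Finset (Fin n)) := by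
  ext j; simp [Sge]
lemma Sge_top (n : ℕ) : Sge n n = (∅ : Finset (Fin n)) := by
  ext j; simp [Sge]
lemma Plt_zero (n : ℕ) : Plt n 0 = (∅ : Finset (Fin n)) := by
  ext j; simp [Plt]
lemma Plt_top (n : ℕ) : Plt n n = (Finset.univ : Finset (Fin n)) := by
  ext j; simp [Plt]


/-- Telescoping (Csiszár-sum-type) identity: if for each `i` the
variable `A_i` is conditionally independent of `B_{i+1}^n` given `(W, A_{i+1}^n)`,
then `∑_i [ I(A_{i+1}^n; A_i | W, B_{i+1}^n) − I(A^{i−1}; A_i | W, B_{i+1}^n) ]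
= − ∑_i I(B_{i+1}^n; A_i | W, A^{i−1})`. -/
theorem telescoping_identity
    (p : Ω → ℝ) (hp : IsPMF p)
    {n : ℕ} {𝒲 : Type*} [Fintype 𝒲] (W : Ω → 𝒲)
    {α β : Fin n → Type*} [∀ i, Fintype (α i)] [∀ i, Fintype (β i)]
    (A : (i : Fin n) → Ω → α i) (B : (i : Fin n) → Ω → β i)
    (hci : ∀ i : Fin n,
      MarkovTriple p (A i)
        (fun ω => (W ω, fun j : {j : Fin n // i < j} => A j.1 ω))
        (fun ω => fun j : {j : Fin n // i < j} => B j.1 ω)) :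
    (∑ i : Fin n,
      (CMI p (fun ω => fun j : {j : Fin n // i < j} => A j.1 ω) (A i)
          (fun ω => (W ω, fun j : {j : Fin n // i < j} => B j.1 ω))
        - CMI p (fun ω => fun j : {j : Fin n // j < i} => A j.1 ω) (A i)
          (fun ω => (W ω, fun j : {j : Fin n // i < j} => B j.1 ω))))
    = - ∑ i : Fin n,
        CMI p (fun ω => fun j : {j : Fin n // i < j} => B j.1 ω) (A i)
          (fun ω => (W ω, fun j : {j : Fin n // j < i} => A j.1 ω)) := by
  classical
  have key : ∀ i : Fin n,
      (CMI p (fun ω => fun j : {j : Fin n // i < j} => A j.1 ω) (A i)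
          (fun ω => (W ω, fun j : {j : Fin n // i < j} => B j.1 ω))
        - CMI p (fun ω => fun j : {j : Fin n // j < i} => A j.1 ω) (A i)
          (fun ω => (W ω, fun j : {j : Fin n // i < j} => B j.1 ω)))
      + CMI p (fun ω => fun j : {j : Fin n // i < j} => B j.1 ω) (A i)
          (fun ω => (W ω, fun j : {j : Fin n // j < i} => A j.1 ω))
      = (EE p W A B (Sge n (i.val + 1)) ∅ + EE p W A B (Plt n (i.val + 1)) ∅)
        - (EE p W A B (Sge n i.val) ∅ + EE p W A B (Plt n i.val) ∅) := by
    intro i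
    have hM := H_markov p hp _ _ _ (hci i)
    rw [conv9 p W A B i, conv10 p W A B i, conv11 p W A B i, conv12 p W A B i] at hM
    simp only [CMI]
    rw [conv1 p W A B i, conv2 p W A B i, conv3 p W A B i, conv4 p W A B i,
      conv5 p W A B i, conv6 p W A B i, conv7 p W A B i, conv8 p W A B i]
    linarith [hM]
  have hsum : ∑ i : Fin n,
      ((CMI p (fun ω => fun j : {j : Fin n // i < j} => A j.1 ω) (A i)
          (fun ω => (W ω, fun j : {j : Fin n // i < j} => B j.1 ω))
        - CMI p (fun ω => fun j : {j : Fin n // j < i} => A j.1 ω) (A i)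
          (fun ω => (W ω, fun j : {j : Fin n // i < j} => B j.1 ω)))
      + CMI p (fun ω => fun j : {j : Fin n // i < j} => B j.1 ω) (A i)
          (fun ω => (W ω, fun j : {j : Fin n // j < i} => A j.1 ω))) = 0 := by
    rw [Finset.sum_congr rfl (fun i _ => key i)]
    have h1 := Fin.sum_univ_eq_sum_range
      (fun k => (EE p W A B (Sge n (k + 1)) ∅ + EE p W A B (Plt n (k + 1)) ∅)
        - (EE p W A B (Sge n k) ∅ + EE p W A B (Plt n k) ∅)) n
    have h2 := Finset.sum_range_sub
      (fun k => EE p W A B (Sge n k) ∅ + EE p W A B (Plt n k) ∅) n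
    rw [h1, h2, Sge_zero, Sge_top, Plt_zero, Plt_top]
    ring
  rw [eq_neg_iff_add_eq_zero, ← Finset.sum_add_distrib]
  exact hsum

end BRSec
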